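/- (Plane separation theorem) Let p ≠ q be points of the Euclidean plane, and let C, D, E be points none of which is collinear with p and q. If C and D are on the same side of the line pq, and D and E are on opposite sides of the line pq, then C and E are on opposite sides of the line pq. -/

import Mathlib

/-- Tarski: `a` and `b` are on opposite sides of the line through `p` and `q`:
there is a point `t` collinear with `p, q` strictly between `a` and `b`. -/
def OppSide (p q a b : EuclideanSpace ℝ (Fin 2)) : Prop :=
  ∃ t : EuclideanSpace ℝ (Fin 2),
    Collinear ℝ ({p, q, t} : Set (EuclideanSpace ℝ (Fin 2))) ∧ Sbtw ℝ a t b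

/-- Tarski: `a` and `b` are on the same side of the line through `p` and `q`. -/
def SameSide (p q a b : EuclideanSpace ℝ (Fin 2)) : Prop :=
  ∃ c : EuclideanSpace ℝ (Fin 2), OppSide p q a c ∧ OppSide p q b c

noncomputable def Fdet (p q x : EuclideanSpace ℝ (Fin 2)) : ℝ :=
  (q 0 - p 0) * (x 1 - p 1) - (q 1 - p 1) * (x 0 - p 0)

lemma euclidean_ext_iff {x y : EuclideanSpace ℝ (Fin 2)} :
    x = y ↔ x 0 = y 0 ∧ x 1 = y 1 := by
  constructor
  · rintro rfl; exact ⟨rfl, rfl⟩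
  · rintro ⟨h0, h1⟩
    ext i
    fin_cases i <;> assumption

lemma lineMap_apply_coord (a b : EuclideanSpace ℝ (Fin 2)) (r : ℝ) (i : Fin 2) :
    AffineMap.lineMap a b r i = a i + r * (b i - a i) := by
  simp [AffineMap.lineMap_apply, PiLp.smul_apply, PiLp.add_apply, PiLp.sub_apply,
    smul_eq_mul]
  ring

lemma Fdet_lineMap (p q a b : EuclideanSpace ℝ (Fin 2)) (r : ℝ) :
    Fdet p q (AffineMap.lineMap a b r) = (1 - r) * Fdet p q a + r * Fdet p q b := by
  simp only [Fdet, lineMap_apply_coord]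
  ring

lemma collinear_iff_Fdet (p q x : EuclideanSpace ℝ (Fin 2)) (hpq : p ≠ q) :
    Collinear ℝ ({p, q, x} : Set (EuclideanSpace ℝ (Fin 2))) ↔ Fdet p q x = 0 := by
  have hmem : p ∈ ({p, q, x} : Set (EuclideanSpace ℝ (Fin 2))) := by simp
  rw [collinear_iff_of_mem hmem]
  constructor
  · rintro ⟨v, hv⟩
    obtain ⟨rq, hq⟩ := hv q (by simp)
    obtain ⟨rx, hx⟩ := hv x (by simp)
    have hq0 : q 0 = rq * v 0 + p 0 := by rw [hq]; simp [PiLp.add_apply, PiLp.smul_apply]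
    have hq1 : q 1 = rq * v 1 + p 1 := by rw [hq]; simp [PiLp.add_apply, PiLp.smul_apply]
    have hx0 : x 0 = rx * v 0 + p 0 := by rw [hx]; simp [PiLp.add_apply, PiLp.smul_apply]
    have hx1 : x 1 = rx * v 1 + p 1 := by rw [hx]; simp [PiLp.add_apply, PiLp.smul_apply]
    simp only [Fdet, hq0, hq1, hx0, hx1]
    ring
  · intro h
    have hne : ¬ (q 0 - p 0 = 0 ∧ q 1 - p 1 = 0) := by
      rintro ⟨h0, h1⟩
      apply hpq
      rw [euclidean_ext_iff]
      constructor <;> linarith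
    refine ⟨q - p, ?_⟩
    intro y hy
    simp only [Set.mem_insert_iff, Set.mem_singleton_iff] at hy
    have key : ∀ s : ℝ, y 0 = s * (q 0 - p 0) + p 0 → y 1 = s * (q 1 - p 1) + p 1 →
        ∃ r : ℝ, y = r • (q - p) +ᵥ p := by
      intro s h0 h1
      refine ⟨s, ?_⟩
      rw [euclidean_ext_iff]
      constructor <;>
        simp [PiLp.add_apply, PiLp.smul_apply, PiLp.sub_apply, h0, h1] <;> ring
    rcases hy with rfl | rfl | rfl
    · exact key 0 (by ring) (by ring)
    · exact key 1 (by ring) (by ring)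
    · by_cases h0 : q 0 - p 0 = 0
      · have h1 : q 1 - p 1 ≠ 0 := fun h1 => hne ⟨h0, h1⟩
        have : y 0 - p 0 = 0 := by
          simp only [Fdet, h0] at h
          have h' : (q 1 - p 1) * (y 0 - p 0) = 0 := by linarith
          rcases mul_eq_zero.mp h' with h'' | h''
          · exact absurd h'' h1
          · exact h''
        exact key ((y 1 - p 1) / (q 1 - p 1)) (by rw [h0]; linarith)
          (by field_simp; ring)
      · refine key ((y 0 - p 0) / (q 0 - p 0)) (by field_simp; ring) ?_
        have : (y 1 - p 1) * (q 0 - p 0) = (q 1 - p 1) * (y 0 - p 0) := by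
          simp only [Fdet] at h; nlinarith [h]
        field_simp
        nlinarith [this]

lemma oppSide_iff (p q a b : EuclideanSpace ℝ (Fin 2)) (hpq : p ≠ q)
    (ha : ¬ Collinear ℝ ({p, q, a} : Set (EuclideanSpace ℝ (Fin 2))))
    (hb : ¬ Collinear ℝ ({p, q, b} : Set (EuclideanSpace ℝ (Fin 2)))) :
    OppSide p q a b ↔ Fdet p q a * Fdet p q b < 0 := by
  rw [collinear_iff_Fdet p q a hpq] at ha
  rw [collinear_iff_Fdet p q b hpq] at hb
  constructor
  · rintro ⟨t, hcol, hsbtw⟩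
    rw [collinear_iff_Fdet p q t hpq] at hcol
    obtain ⟨⟨r, hr, hrt⟩, hne⟩ := sbtw_iff_mem_image_Ioo_and_ne.mp hsbtw
    have := Fdet_lineMap p q a b r
    rw [hrt, hcol] at this
    obtain ⟨hr0, hr1⟩ := hr
    have key : r * (Fdet p q a * Fdet p q b) = -((1 - r) * (Fdet p q a * Fdet p q a)) := by
      linear_combination (-(Fdet p q a)) * this
    nlinarith [key, mul_self_pos.mpr ha, hr0, hr1]
  · intro h
    have hab : Fdet p q a ≠ Fdet p q b := by
      intro he; rw [he] at h; nlinarith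
    set r : ℝ := Fdet p q a / (Fdet p q a - Fdet p q b) with hrdef
    have hd : Fdet p q a - Fdet p q b ≠ 0 := sub_ne_zero.mpr hab
    have hr : r ∈ Set.Ioo (0 : ℝ) 1 := by
      rcases lt_or_gt_of_ne ha with hlt | hgt
      · have hb' : 0 < Fdet p q b := by nlinarith
        constructor
        · apply div_pos_of_neg_of_neg hlt; linarith
        · rw [div_lt_one_iff]; right; right; constructor <;> linarith
      · have hb' : Fdet p q b < 0 := by nlinarith
        constructor
        · apply div_pos hgt; linarith
        · rw [div_lt_one (by linarith)]; linarith
    refine ⟨AffineMap.lineMap a b r, ?_, ?_⟩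
    · rw [collinear_iff_Fdet _ _ _ hpq, Fdet_lineMap]
      field_simp [hrdef]
      have h' := div_mul_cancel₀ (Fdet p q a) hd
      rw [← hrdef] at h'
      linear_combination (-1 : ℝ) * h'
    · rw [sbtw_lineMap_iff]
      refine ⟨fun he => ?_, hr⟩
      · exact hab (by rw [he])

theorem plane_separation (p q C D E : EuclideanSpace ℝ (Fin 2)) (hpq : p ≠ q)
    (hC : ¬ Collinear ℝ ({p, q, C} : Set (EuclideanSpace ℝ (Fin 2))))
    (hD : ¬ Collinear ℝ ({p, q, D} : Set (EuclideanSpace ℝ (Fin 2))))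
    (hE : ¬ Collinear ℝ ({p, q, E} : Set (EuclideanSpace ℝ (Fin 2))))
    (hCD : SameSide p q C D) (hDE : OppSide p q D E) :
    OppSide p q C E := by
  obtain ⟨c, hCc, hDc⟩ := hCD
  have hcnot : ¬ Collinear ℝ ({p, q, c} : Set (EuclideanSpace ℝ (Fin 2))) := by
    rw [collinear_iff_Fdet _ _ _ hpq]
    obtain ⟨t, hcol, hsbtw⟩ := hCc
    rw [collinear_iff_Fdet p q t hpq] at hcol
    obtain ⟨⟨r, hr, hrt⟩, _⟩ := sbtw_iff_mem_image_Ioo_and_ne.mp hsbtw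
    have hl := Fdet_lineMap p q C c r
    rw [hrt, hcol] at hl
    rw [collinear_iff_Fdet _ _ _ hpq] at hC
    intro hc0
    rw [hc0] at hl
    obtain ⟨hr0, hr1⟩ := hr
    have : (1 - r) * Fdet p q C = 0 := by linarith
    rcases mul_eq_zero.mp this with h | h
    · linarith
    · exact hC h
  rw [oppSide_iff p q C c hpq hC hcnot] at hCc
  rw [oppSide_iff p q D c hpq hD hcnot] at hDc
  rw [oppSide_iff p q D E hpq hD hE] at hDE
  rw [oppSide_iff p q C E hpq hC hE]
  nlinarith [hCc, hDc, hDE, mul_self_pos.mpr ((collinear_iff_Fdet p q c hpq).not.mp hcnot ∘ id)]
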